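/- (Trace expansion of the angle–angle FIM term in Θ, eqs. (41)–(43).) Let ψ, a ∈ ℂ^N, G ∈ ℂ^{N×M}, R_s, W ∈ ℂ^{M×M}, and let Z_1, Z_2 ∈ ℂ^{N×N} be diagonal. Set A = diag(a), Θ = ψψ^H, C_i = G^T A (Z_i ψψ^T + ψψ^T Z_i) A G for i = 1, 2, R_1 = A G R_s G^H A^H, and R_2 = A^H G^* W G^T A (where G^* is the entrywise complex conjugate of G). Then tr( C_1^H W C_2 R_s ) = tr(R_1 Θ^T)·tr(Z_1^H R_2 Z_2 Θ) + tr(Z_2 R_1 Θ^T)·tr(Z_1^H R_2 Θ) + tr(R_1 Z_1^H Θ^T)·tr(R_2 Z_2 Θ) + tr(Z_2 R_1 Z_1^H Θ^T)·tr(R_2 Θ). -/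
import Mathlib

open Matrix Complex


lemma vmv_mul {n : Type*} [Fintype n] (u v : n → ℂ) (M : Matrix n n ℂ) :
    Matrix.vecMulVec u v * M = Matrix.vecMulVec u (Matrix.vecMul v M) := by
  ext i j
  simp [Matrix.vecMulVec_apply, Matrix.mul_apply, Matrix.vecMul, dotProduct,
    Finset.mul_sum, mul_assoc]

lemma vmv_mul_vmv {n : Type*} [Fintype n] (u v p q : n → ℂ) :
    Matrix.vecMulVec u v * Matrix.vecMulVec p q
      = (dotProduct v p) • Matrix.vecMulVec u q := by
  ext i j
  simp only [Matrix.mul_apply, Matrix.vecMulVec_apply, Matrix.smul_apply,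
    dotProduct, Finset.sum_mul, smul_eq_mul]
  exact Finset.sum_congr rfl fun k _ => by ring

lemma tr_vmv {n : Type*} [Fintype n] (p w : n → ℂ) :
    Matrix.trace (Matrix.vecMulVec p w) = dotProduct w p := by
  simp [Matrix.trace, Matrix.diag, Matrix.vecMulVec_apply, dotProduct, mul_comm]

lemma keylem {n : Type*} [Fintype n] (u v : n → ℂ) (Mm K : Matrix n n ℂ) :
    Matrix.trace (Matrix.vecMulVec u u * (Mm * (Matrix.vecMulVec v v * K))) =
      Matrix.trace (Mm * Matrix.vecMulVec v u) * Matrix.trace (K * Matrix.vecMulVec u v) := by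
  rw [← mul_assoc, ← mul_assoc, vmv_mul, vmv_mul_vmv, smul_mul_assoc, Matrix.trace_smul,
    Matrix.trace_mul_comm Mm, vmv_mul, tr_vmv, Matrix.trace_mul_comm K, smul_eq_mul, vmv_mul, tr_vmv, vmv_mul, tr_vmv]

/-- trace expansion of the angle–angle FIM term in `Θ`, eqs. (41)–(43):
with `A = diag(a)`, `Θ = ψψᴴ`, `C_i = Gᵀ A (Z_i ψψᵀ + ψψᵀ Z_i) A G`,
`R₁ = A G R_s Gᴴ Aᴴ`, and `R₂ = Aᴴ G* W Gᵀ A`,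
`tr(C₁ᴴ W C₂ R_s) = tr(R₁Θᵀ)·tr(Z₁ᴴR₂Z₂Θ) + tr(Z₂R₁Θᵀ)·tr(Z₁ᴴR₂Θ)
 + tr(R₁Z₁ᴴΘᵀ)·tr(R₂Z₂Θ) + tr(Z₂R₁Z₁ᴴΘᵀ)·tr(R₂Θ)`. -/
theorem stmt16 (N M : ℕ) (ψ a : Fin N → ℂ)
    (G : Matrix (Fin N) (Fin M) ℂ) (Rs W : Matrix (Fin M) (Fin M) ℂ)
    (z1 z2 : Fin N → ℂ) (Z1 Z2 : Matrix (Fin N) (Fin N) ℂ)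
    (hZ1 : Z1 = Matrix.diagonal z1) (hZ2 : Z2 = Matrix.diagonal z2)
    (A Θ : Matrix (Fin N) (Fin N) ℂ)
    (hA : A = Matrix.diagonal a) (hΘ : Θ = Matrix.vecMulVec ψ (star ψ))
    (C1 C2 : Matrix (Fin M) (Fin M) ℂ)
    (hC1 : C1 = Gᵀ * A * (Z1 * Matrix.vecMulVec ψ ψ + Matrix.vecMulVec ψ ψ * Z1) * A * G)
    (hC2 : C2 = Gᵀ * A * (Z2 * Matrix.vecMulVec ψ ψ + Matrix.vecMulVec ψ ψ * Z2) * A * G)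
    (R1 R2 : Matrix (Fin N) (Fin N) ℂ)
    (hR1 : R1 = A * G * Rs * Gᴴ * Aᴴ)
    (hR2 : R2 = Aᴴ * G.map (starRingEnd ℂ) * W * Gᵀ * A) :
    Matrix.trace (C1ᴴ * W * C2 * Rs)
      = Matrix.trace (R1 * Θᵀ) * Matrix.trace (Z1ᴴ * R2 * Z2 * Θ)
      + Matrix.trace (Z2 * R1 * Θᵀ) * Matrix.trace (Z1ᴴ * R2 * Θ)
      + Matrix.trace (R1 * Z1ᴴ * Θᵀ) * Matrix.trace (R2 * Z2 * Θ)
      + Matrix.trace (Z2 * R1 * Z1ᴴ * Θᵀ) * Matrix.trace (R2 * Θ) := by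
  subst hC1 hC2 hΘ
  have hPH : (Matrix.vecMulVec ψ ψ)ᴴ = Matrix.vecMulVec (star ψ) (star ψ) := by
    ext i j
    simp [Matrix.vecMulVec_apply, Matrix.conjTranspose_apply, mul_comm]
  have hΘT : (Matrix.vecMulVec ψ (star ψ))ᵀ = Matrix.vecMulVec (star ψ) ψ := by
    ext i j
    simp [Matrix.vecMulVec_apply, mul_comm]
  have hGm : G.map (starRingEnd ℂ) = (Gᵀ)ᴴ := by
    ext i j
    simp [Matrix.conjTranspose_apply, Matrix.transpose_apply]
  have main : Matrix.trace ((Gᵀ * A * (Z1 * Matrix.vecMulVec ψ ψ + Matrix.vecMulVec ψ ψ * Z1) * A * G)ᴴ * W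
        * (Gᵀ * A * (Z2 * Matrix.vecMulVec ψ ψ + Matrix.vecMulVec ψ ψ * Z2) * A * G) * Rs)
      = Matrix.trace (((Matrix.vecMulVec ψ ψ)ᴴ * Z1ᴴ + Z1ᴴ * (Matrix.vecMulVec ψ ψ)ᴴ)
          * (R2 * ((Z2 * Matrix.vecMulVec ψ ψ + Matrix.vecMulVec ψ ψ * Z2) * R1))) := by
    rw [show (Gᵀ * A * (Z1 * Matrix.vecMulVec ψ ψ + Matrix.vecMulVec ψ ψ * Z1) * A * G)ᴴ * W
          * (Gᵀ * A * (Z2 * Matrix.vecMulVec ψ ψ + Matrix.vecMulVec ψ ψ * Z2) * A * G) * Rs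
        = (Gᴴ * Aᴴ) * (((Matrix.vecMulVec ψ ψ)ᴴ * Z1ᴴ + Z1ᴴ * (Matrix.vecMulVec ψ ψ)ᴴ)
            * ((Aᴴ * (G.map (starRingEnd ℂ) * (W * (Gᵀ * A))))
              * ((Z2 * Matrix.vecMulVec ψ ψ + Matrix.vecMulVec ψ ψ * Z2) * (A * (G * Rs)))))
        from by
          simp only [Matrix.conjTranspose_mul, Matrix.conjTranspose_add, hGm, Matrix.mul_assoc]]
    rw [Matrix.trace_mul_comm, hR2, hR1]
    congr 1
    simp only [Matrix.mul_assoc]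
  rw [main, hPH]
  rw [show (Matrix.vecMulVec (star ψ) (star ψ) * Z1ᴴ + Z1ᴴ * Matrix.vecMulVec (star ψ) (star ψ))
        * (R2 * ((Z2 * Matrix.vecMulVec ψ ψ + Matrix.vecMulVec ψ ψ * Z2) * R1))
      = Matrix.vecMulVec (star ψ) (star ψ) * ((Z1ᴴ * R2 * Z2) * (Matrix.vecMulVec ψ ψ * R1))
      + Matrix.vecMulVec (star ψ) (star ψ) * ((Z1ᴴ * R2) * (Matrix.vecMulVec ψ ψ * (Z2 * R1)))
      + Z1ᴴ * (Matrix.vecMulVec (star ψ) (star ψ) * ((R2 * Z2) * (Matrix.vecMulVec ψ ψ * R1)))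
      + Z1ᴴ * (Matrix.vecMulVec (star ψ) (star ψ) * (R2 * (Matrix.vecMulVec ψ ψ * (Z2 * R1))))
      from by
        simp only [mul_add, add_mul, Matrix.mul_assoc]
        abel]
  simp only [Matrix.trace_add]
  rw [keylem (star ψ) ψ (Z1ᴴ * R2 * Z2) R1, keylem (star ψ) ψ (Z1ᴴ * R2) (Z2 * R1),
    Matrix.trace_mul_comm Z1ᴴ, Matrix.trace_mul_comm Z1ᴴ]
  rw [show Matrix.vecMulVec (star ψ) (star ψ) * (R2 * Z2 * (Matrix.vecMulVec ψ ψ * R1)) * Z1ᴴ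
      = Matrix.vecMulVec (star ψ) (star ψ) * ((R2 * Z2) * (Matrix.vecMulVec ψ ψ * (R1 * Z1ᴴ)))
      from by simp only [Matrix.mul_assoc]]
  rw [show Matrix.vecMulVec (star ψ) (star ψ) * (R2 * (Matrix.vecMulVec ψ ψ * (Z2 * R1))) * Z1ᴴ
      = Matrix.vecMulVec (star ψ) (star ψ) * (R2 * (Matrix.vecMulVec ψ ψ * (Z2 * R1 * Z1ᴴ)))
      from by simp only [Matrix.mul_assoc]]
  rw [keylem (star ψ) ψ (R2 * Z2) (R1 * Z1ᴴ), keylem (star ψ) ψ R2 (Z2 * R1 * Z1ᴴ)]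
  rw [hΘT]
  simp only [Matrix.mul_assoc]
  ring
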